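/- For every q* > 0, the super-level set {ℓ ∈ ℝ¹⁰ : Q_econ(e^{ℓ₁},…,e^{ℓ₁₀}) ≥ q*} is a convex subset of ℝ¹⁰. -/

import Mathlib

/-- The annuity (amortization) factor `φ(i, τL)` with the interest rate `i` in percent. -/
noncomputable def annuity (i tL : ℝ) : ℝ :=
  0.01 * i * (1 + 0.01 * i) ^ tL / ((1 + 0.01 * i) ^ tL - 1)

/-- The utilization factor `U = X / (X + p·τ)`. -/
noncomputable def util (p tau X : ℝ) : ℝ := X / (X + p * tau)

/-- The economic gain factor `Q_econ` of the fusion power plant model,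
with `α = 8.76×10⁻³` and `β = 31.5`. -/
noncomputable def Qecon (p tau tL E X eta cY mS mF i : ℝ) : ℝ :=
  (8.76e-3 * E * eta * p * util p tau X) /
    (31.5 * cY * p * util p tau X + mS * (p / X) * util p tau X + mF * annuity i tL)

/-- `Q_econ` as a function of the vector of the ten parameters
`(p, τ, τL, E, X, η, cY, mS, mF, i)`. -/
noncomputable def QeconV (θ : Fin 10 → ℝ) : ℝ :=
  Qecon (θ 0) (θ 1) (θ 2) (θ 3) (θ 4) (θ 5) (θ 6) (θ 7) (θ 8) (θ 9)

/-! ### Auxiliary machinery -/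

open Real Set

/-- `χ(u) = log log(1 + 0.01 eᵘ)`. -/
noncomputable def chiF (u : ℝ) : ℝ := Real.log (Real.log (1 + 0.01 * Real.exp u))

/-- first derivative of `χ` -/
noncomputable def chiD (u : ℝ) : ℝ :=
  0.01 * Real.exp u / ((1 + 0.01 * Real.exp u) * Real.log (1 + 0.01 * Real.exp u))

/-- second derivative of `χ` -/
noncomputable def chiD2 (u : ℝ) : ℝ :=
  0.01 * Real.exp u * (Real.log (1 + 0.01 * Real.exp u) - 0.01 * Real.exp u) /
    ((1 + 0.01 * Real.exp u) * Real.log (1 + 0.01 * Real.exp u)) ^ 2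

/-- `G(t) = -log(1 - exp(-eᵗ))`. -/
noncomputable def GF (t : ℝ) : ℝ := -Real.log (1 - Real.exp (-Real.exp t))

/-- first derivative of `G` -/
noncomputable def GD (t : ℝ) : ℝ :=
  -(Real.exp t * Real.exp (-Real.exp t) / (1 - Real.exp (-Real.exp t)))

/-- second derivative of `G` -/
noncomputable def GD2 (t : ℝ) : ℝ :=
  Real.exp t * Real.exp (-Real.exp t) * (Real.exp t + Real.exp (-Real.exp t) - 1) /
    (1 - Real.exp (-Real.exp t)) ^ 2

lemma base_pos (u : ℝ) : (0 : ℝ) < 1 + 0.01 * Real.exp u := by positivity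

lemma logbase_pos (u : ℝ) : 0 < Real.log (1 + 0.01 * Real.exp u) := by
  apply Real.log_pos
  have := Real.exp_pos u
  nlinarith

lemma base_hasDeriv (u : ℝ) :
    HasDerivAt (fun u => 1 + 0.01 * Real.exp u) (0.01 * Real.exp u) u := by
  simpa using ((Real.hasDerivAt_exp u).const_mul (0.01 : ℝ)).const_add (1 : ℝ)

lemma logbase_hasDeriv (u : ℝ) :
    HasDerivAt (fun u => Real.log (1 + 0.01 * Real.exp u))
      (0.01 * Real.exp u / (1 + 0.01 * Real.exp u)) u :=
  (base_hasDeriv u).log (ne_of_gt (base_pos u))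

lemma chiF_hasDeriv (u : ℝ) : HasDerivAt chiF (chiD u) u := by
  have h := (logbase_hasDeriv u).log (ne_of_gt (logbase_pos u))
  refine h.congr_deriv ?_
  unfold chiD
  rw [div_div]

lemma chiD_hasDeriv (u : ℝ) : HasDerivAt chiD (chiD2 u) u := by
  have hnum : HasDerivAt (fun u => 0.01 * Real.exp u) (0.01 * Real.exp u) u :=
    (Real.hasDerivAt_exp u).const_mul (0.01 : ℝ)
  have hden : HasDerivAt
      (fun u => (1 + 0.01 * Real.exp u) * Real.log (1 + 0.01 * Real.exp u))
      (0.01 * Real.exp u * Real.log (1 + 0.01 * Real.exp u) +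
        (1 + 0.01 * Real.exp u) * (0.01 * Real.exp u / (1 + 0.01 * Real.exp u))) u :=
    (base_hasDeriv u).mul (logbase_hasDeriv u)
  have hd0 : (1 + 0.01 * Real.exp u) * Real.log (1 + 0.01 * Real.exp u) ≠ 0 :=
    ne_of_gt (mul_pos (base_pos u) (logbase_pos u))
  have h := hnum.div hden hd0
  refine h.congr_deriv ?_
  unfold chiD2
  have h1 : (1 + 0.01 * Real.exp u) ≠ 0 := ne_of_gt (base_pos u)
  field_simp
  ring

lemma chiF_concave : ConcaveOn ℝ univ chiF := by
  apply concaveOn_of_hasDerivWithinAt2_nonpos convex_univ (f' := chiD) (f'' := chiD2)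
  · exact fun x _ => (chiF_hasDeriv x).continuousAt.continuousWithinAt
  · exact fun x _ => (chiF_hasDeriv x).hasDerivWithinAt
  · exact fun x _ => (chiD_hasDeriv x).hasDerivWithinAt
  · intro x _
    have hL : Real.log (1 + 0.01 * Real.exp x) - 0.01 * Real.exp x ≤ 0 := by
      have := Real.log_le_sub_one_of_pos (base_pos x)
      linarith
    have hnum : 0.01 * Real.exp x * (Real.log (1 + 0.01 * Real.exp x) - 0.01 * Real.exp x) ≤ 0 :=
      mul_nonpos_of_nonneg_of_nonpos (by positivity) hL
    exact div_nonpos_iff.mpr (Or.inr ⟨hnum, sq_nonneg _⟩)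

lemma expB_lt_one (t : ℝ) : Real.exp (-Real.exp t) < 1 :=
  Real.exp_lt_one_iff.mpr (neg_neg_iff_pos.mpr (Real.exp_pos t))

lemma oneSubB_pos (t : ℝ) : 0 < 1 - Real.exp (-Real.exp t) :=
  sub_pos.mpr (expB_lt_one t)

lemma B_hasDeriv (t : ℝ) :
    HasDerivAt (fun t => Real.exp (-Real.exp t))
      (Real.exp (-Real.exp t) * (-Real.exp t)) t :=
  (Real.hasDerivAt_exp t).neg.exp

lemma den_hasDeriv (t : ℝ) :
    HasDerivAt (fun t => 1 - Real.exp (-Real.exp t))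
      (-(Real.exp (-Real.exp t) * (-Real.exp t))) t :=
  (B_hasDeriv t).const_sub (1 : ℝ)

lemma GF_hasDeriv (t : ℝ) : HasDerivAt GF (GD t) t := by
  have h := ((den_hasDeriv t).log (ne_of_gt (oneSubB_pos t))).neg
  refine h.congr_deriv ?_
  unfold GD
  field_simp

lemma GD_hasDeriv (t : ℝ) : HasDerivAt GD (GD2 t) t := by
  have hnum : HasDerivAt (fun t => Real.exp t * Real.exp (-Real.exp t))
      (Real.exp t * Real.exp (-Real.exp t) +
        Real.exp t * (Real.exp (-Real.exp t) * (-Real.exp t))) t :=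
    (Real.hasDerivAt_exp t).mul (B_hasDeriv t)
  have h := (hnum.div (den_hasDeriv t) (ne_of_gt (oneSubB_pos t))).neg
  refine h.congr_deriv ?_
  unfold GD2
  have hd : (1 - Real.exp (-Real.exp t)) ≠ 0 := ne_of_gt (oneSubB_pos t)
  field_simp
  ring

lemma GF_convex : ConvexOn ℝ univ GF := by
  apply convexOn_of_hasDerivWithinAt2_nonneg convex_univ (f' := GD) (f'' := GD2)
  · exact fun x _ => (GF_hasDeriv x).continuousAt.continuousWithinAt
  · exact fun x _ => (GF_hasDeriv x).hasDerivWithinAt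
  · exact fun x _ => (GD_hasDeriv x).hasDerivWithinAt
  · intro x _
    have h1 : -Real.exp x + 1 ≤ Real.exp (-Real.exp x) := Real.add_one_le_exp _
    have hnum : 0 ≤ Real.exp x * Real.exp (-Real.exp x) *
        (Real.exp x + Real.exp (-Real.exp x) - 1) := by
      apply mul_nonneg (mul_nonneg (Real.exp_pos x).le (Real.exp_pos _).le)
      linarith
    exact div_nonneg hnum (sq_nonneg _)

lemma GF_anti : Antitone GF := by
  intro s t hst
  unfold GF
  have h1 : Real.exp (-Real.exp t) ≤ Real.exp (-Real.exp s) :=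
    Real.exp_le_exp.mpr (neg_le_neg (Real.exp_le_exp.mpr hst))
  have h2 : 0 < 1 - Real.exp (-Real.exp s) := oneSubB_pos s
  have h3 : 0 < 1 - Real.exp (-Real.exp t) := oneSubB_pos t
  have h4 : Real.log (1 - Real.exp (-Real.exp s)) ≤ Real.log (1 - Real.exp (-Real.exp t)) :=
    (Real.log_le_log_iff h2 h3).mpr (by linarith)
  linarith

/-- affine functions on `Fin 10 → ℝ` are convex -/
lemma convexOn_of_affine {f : (Fin 10 → ℝ) → ℝ}
    (h : ∀ (a b : ℝ) (x y : Fin 10 → ℝ), a + b = 1 →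
      f (a • x + b • y) = a * f x + b * f y) :
    ConvexOn ℝ univ f :=
  ⟨convex_univ, fun x _ y _ a b _ _ hab => by
    rw [smul_eq_mul, smul_eq_mul]; exact le_of_eq (h a b x y hab)⟩

lemma concaveOn_of_affine {f : (Fin 10 → ℝ) → ℝ}
    (h : ∀ (a b : ℝ) (x y : Fin 10 → ℝ), a + b = 1 →
      f (a • x + b • y) = a * f x + b * f y) :
    ConcaveOn ℝ univ f :=
  ⟨convex_univ, fun x _ y _ a b _ _ hab => by
    rw [smul_eq_mul, smul_eq_mul]; exact ge_of_eq (h a b x y hab)⟩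

lemma chiF_coord_concave : ConcaveOn ℝ univ (fun ℓ : Fin 10 → ℝ => chiF (ℓ 9)) := by
  refine ⟨convex_univ, fun x _ y _ a b ha hb hab => ?_⟩
  have := chiF_concave.2 (mem_univ (x 9)) (mem_univ (y 9)) ha hb hab
  simpa [Pi.add_apply, Pi.smul_apply, smul_eq_mul] using this

lemma GF_comp_convex {h : (Fin 10 → ℝ) → ℝ} (hh : ConcaveOn ℝ univ h) :
    ConvexOn ℝ univ (fun x => GF (h x)) := by
  refine ⟨convex_univ, fun x _ y _ a b ha hb hab => ?_⟩
  calc GF (h (a • x + b • y)) ≤ GF (a • h x + b • h y) :=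
        GF_anti (hh.2 (mem_univ x) (mem_univ y) ha hb hab)
    _ ≤ a • GF (h x) + b • GF (h y) :=
        GF_convex.2 (mem_univ _) (mem_univ _) ha hb hab

lemma exp_comp_convex {g : (Fin 10 → ℝ) → ℝ} (hg : ConvexOn ℝ univ g) :
    ConvexOn ℝ univ (fun x => Real.exp (g x)) := by
  refine ⟨convex_univ, fun x _ y _ a b ha hb hab => ?_⟩
  calc Real.exp (g (a • x + b • y)) ≤ Real.exp (a • g x + b • g y) :=
        Real.exp_le_exp.mpr (hg.2 (mem_univ x) (mem_univ y) ha hb hab)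
    _ ≤ a • Real.exp (g x) + b • Real.exp (g y) :=
        convexOn_exp.2 (mem_univ _) (mem_univ _) ha hb hab

/-- `Φ(ℓ) = log φ(e^{ℓ9}, e^{ℓ2})`. -/
noncomputable def PhiF (ℓ : Fin 10 → ℝ) : ℝ :=
  (Real.log 0.01 + ℓ 9) + GF (ℓ 2 + chiF (ℓ 9))

lemma PhiF_convex : ConvexOn ℝ univ PhiF := by
  have hlin : ConvexOn ℝ univ (fun ℓ : Fin 10 → ℝ => Real.log 0.01 + ℓ 9) :=
    convexOn_of_affine (fun a b x y hab => by
      simp only [Pi.add_apply, Pi.smul_apply, smul_eq_mul]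
      have hb : b = 1 - a := by linarith
      subst hb
      ring)
  have hin : ConcaveOn ℝ univ (fun ℓ : Fin 10 → ℝ => ℓ 2 + chiF (ℓ 9)) := by
    have h2 : ConcaveOn ℝ univ (fun ℓ : Fin 10 → ℝ => ℓ 2) :=
      concaveOn_of_affine (fun a b x y hab => by
        simp only [Pi.add_apply, Pi.smul_apply, smul_eq_mul])
    exact h2.add chiF_coord_concave
  exact hlin.add (GF_comp_convex hin)

lemma annuity_exp_form {i t : ℝ} (hi : 0 < i) (ht : 0 < t) :
    annuity i t = 0.01 * i / (1 - Real.exp (-(t * Real.log (1 + 0.01 * i)))) := by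
  have hb : (1 : ℝ) < 1 + 0.01 * i := by nlinarith
  have hL : 0 < Real.log (1 + 0.01 * i) := Real.log_pos hb
  have hs : 0 < t * Real.log (1 + 0.01 * i) := mul_pos ht hL
  have hrt : (1 + 0.01 * i) ^ t = Real.exp (t * Real.log (1 + 0.01 * i)) := by
    rw [Real.rpow_def_of_pos (by linarith), mul_comm]
  unfold annuity
  rw [hrt, Real.exp_neg]
  have h1 : (1 : ℝ) < Real.exp (t * Real.log (1 + 0.01 * i)) :=
    Real.one_lt_exp_iff.mpr hs
  have h2 : Real.exp (t * Real.log (1 + 0.01 * i)) - 1 ≠ 0 := by linarith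
  have h3 : Real.exp (t * Real.log (1 + 0.01 * i)) ≠ 0 := by positivity
  field_simp
  try ring

lemma exp_PhiF (ℓ : Fin 10 → ℝ) :
    Real.exp (PhiF ℓ) = annuity (Real.exp (ℓ 9)) (Real.exp (ℓ 2)) := by
  rw [annuity_exp_form (Real.exp_pos _) (Real.exp_pos _)]
  have hL : 0 < Real.log (1 + 0.01 * Real.exp (ℓ 9)) := logbase_pos (ℓ 9)
  have hs : Real.exp (ℓ 2 + chiF (ℓ 9)) =
      Real.exp (ℓ 2) * Real.log (1 + 0.01 * Real.exp (ℓ 9)) := by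
    unfold chiF
    rw [Real.exp_add, Real.exp_log hL]
  unfold PhiF GF
  rw [Real.exp_add, Real.exp_add, Real.exp_neg,
    Real.exp_log (oneSubB_pos (ℓ 2 + chiF (ℓ 9))),
    Real.exp_log (by norm_num : (0 : ℝ) < 0.01), hs]
  try rw [div_eq_mul_inv]
  try ring

lemma annuity_pos {i t : ℝ} (hi : 0 < i) (ht : 0 < t) : 0 < annuity i t := by
  rw [annuity_exp_form hi ht]
  have hb : (1 : ℝ) < 1 + 0.01 * i := by nlinarith
  have hs : 0 < t * Real.log (1 + 0.01 * i) := mul_pos ht (Real.log_pos hb)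
  have : Real.exp (-(t * Real.log (1 + 0.01 * i))) < 1 :=
    Real.exp_lt_one_iff.mpr (by linarith)
  apply div_pos (by positivity)
  linarith

/-- the key algebraic reformulation -/
lemma key_iff (qstar p tau tL E X eta cY mS mF i : ℝ) (hq : 0 < qstar)
    (hp : 0 < p) (htau : 0 < tau) (htL : 0 < tL) (hE : 0 < E) (hX : 0 < X)
    (heta : 0 < eta) (hcY : 0 < cY) (hmS : 0 < mS) (hmF : 0 < mF) (hi : 0 < i) :
    (qstar ≤ Qecon p tau tL E X eta cY mS mF i) ↔
      qstar / 8.76e-3 * (31.5 * (cY / (E * eta)) + mS / (E * eta * X) +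
        annuity i tL * mF / (p * E * eta) +
        annuity i tL * mF * tau / (E * eta * X)) ≤ 1 := by
  have hA : 0 < annuity i tL := annuity_pos hi htL
  have hU : 0 < util p tau X := div_pos hX (by positivity)
  have hN : 0 < 8.76e-3 * E * eta * p * util p tau X := by positivity
  have hD : 0 < 31.5 * cY * p * util p tau X + mS * (p / X) * util p tau X +
      mF * annuity i tL := by positivity
  unfold Qecon
  rw [le_div_iff₀ hD]
  have hid : qstar / 8.76e-3 * (31.5 * (cY / (E * eta)) + mS / (E * eta * X) +
        annuity i tL * mF / (p * E * eta) +
        annuity i tL * mF * tau / (E * eta * X)) *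
      (8.76e-3 * E * eta * p * util p tau X) =
      qstar * (31.5 * cY * p * util p tau X + mS * (p / X) * util p tau X +
        mF * annuity i tL) := by
    unfold util
    have h1 : X + p * tau ≠ 0 := by positivity
    field_simp
    ring
  rw [← hid, mul_le_iff_le_one_left hN]

/-- **Convexity of viability super-level sets in log-coordinates.** For every
`q* > 0`, the set `{ℓ ∈ ℝ¹⁰ : Q_econ(e^{ℓ₁},…,e^{ℓ₁₀}) ≥ q*}` is convex. -/
theorem qecon_superlevel_convex (qstar : ℝ) (hq : 0 < qstar) :
    Convex ℝ {ℓ : Fin 10 → ℝ | qstar ≤ QeconV (fun j => Real.exp (ℓ j))} := by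
  -- the four exponents
  set g1 : (Fin 10 → ℝ) → ℝ := fun ℓ => ℓ 6 - ℓ 3 - ℓ 5 with hg1def
  set g2 : (Fin 10 → ℝ) → ℝ := fun ℓ => ℓ 7 - ℓ 3 - ℓ 5 - ℓ 4 with hg2def
  set g3 : (Fin 10 → ℝ) → ℝ := fun ℓ => PhiF ℓ + (ℓ 8 - ℓ 0 - ℓ 3 - ℓ 5) with hg3def
  set g4 : (Fin 10 → ℝ) → ℝ := fun ℓ => PhiF ℓ + (ℓ 8 + ℓ 1 - ℓ 3 - ℓ 5 - ℓ 4) with hg4def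
  set F : (Fin 10 → ℝ) → ℝ := fun ℓ => (qstar / 8.76e-3) •
    ((31.5 : ℝ) • Real.exp (g1 ℓ) + Real.exp (g2 ℓ) + Real.exp (g3 ℓ) + Real.exp (g4 ℓ))
    with hFdef
  have hg1 : ConvexOn ℝ univ g1 :=
    convexOn_of_affine (fun a b x y hab => by
      simp only [hg1def, Pi.add_apply, Pi.smul_apply, smul_eq_mul]; ring)
  have hg2 : ConvexOn ℝ univ g2 :=
    convexOn_of_affine (fun a b x y hab => by
      simp only [hg2def, Pi.add_apply, Pi.smul_apply, smul_eq_mul]; ring)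
  have hg3 : ConvexOn ℝ univ g3 :=
    PhiF_convex.add (convexOn_of_affine (fun a b x y hab => by
      simp only [Pi.add_apply, Pi.smul_apply, smul_eq_mul]; ring))
  have hg4 : ConvexOn ℝ univ g4 :=
    PhiF_convex.add (convexOn_of_affine (fun a b x y hab => by
      simp only [Pi.add_apply, Pi.smul_apply, smul_eq_mul]; ring))
  have hF : ConvexOn ℝ univ F := by
    apply ConvexOn.smul (by positivity)
    exact ((((exp_comp_convex hg1).smul (by norm_num)).add
      (exp_comp_convex hg2)).add (exp_comp_convex hg3)).add (exp_comp_convex hg4)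
  have hset : {ℓ : Fin 10 → ℝ | qstar ≤ QeconV (fun j => Real.exp (ℓ j))} =
      {ℓ ∈ univ | F ℓ ≤ 1} := by
    ext ℓ
    simp only [mem_setOf_eq, sep_univ, QeconV]
    rw [key_iff qstar _ _ _ _ _ _ _ _ _ _ hq (Real.exp_pos _) (Real.exp_pos _)
      (Real.exp_pos _) (Real.exp_pos _) (Real.exp_pos _) (Real.exp_pos _)
      (Real.exp_pos _) (Real.exp_pos _) (Real.exp_pos _) (Real.exp_pos _)]
    have hFval : F ℓ = qstar / 8.76e-3 *
        (31.5 * (Real.exp (ℓ 6) / (Real.exp (ℓ 3) * Real.exp (ℓ 5))) +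
          Real.exp (ℓ 7) / (Real.exp (ℓ 3) * Real.exp (ℓ 5) * Real.exp (ℓ 4)) +
          annuity (Real.exp (ℓ 9)) (Real.exp (ℓ 2)) * Real.exp (ℓ 8) /
            (Real.exp (ℓ 0) * Real.exp (ℓ 3) * Real.exp (ℓ 5)) +
          annuity (Real.exp (ℓ 9)) (Real.exp (ℓ 2)) * Real.exp (ℓ 8) * Real.exp (ℓ 1) /
            (Real.exp (ℓ 3) * Real.exp (ℓ 5) * Real.exp (ℓ 4))) := by
      simp only [hFdef, hg1def, hg2def, hg3def, hg4def, smul_eq_mul,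
        Real.exp_sub, Real.exp_add, exp_PhiF]
      have h0 := (Real.exp_pos (ℓ 0)).ne'
      have h3 := (Real.exp_pos (ℓ 3)).ne'
      have h4 := (Real.exp_pos (ℓ 4)).ne'
      have h5 := (Real.exp_pos (ℓ 5)).ne'
      field_simp
      try ring
      try exact Or.inl trivial
    rw [hFval]
  rw [hset]
  exact hF.convex_le 1
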